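/- Let (X,d) be a metric space, let P and C be finite nonempty subsets of X, and let a* ∈ P satisfy d(a*,C) = max_{p∈P} d(p,C). Let r > 0 and γ ≥ 4. Let Z be a finite subset of P containing a point z' with d(z',a*) ≤ 2r, and let Y' be a finite subset of X such that every p ∈ P is within distance r of some point of Y'. Define Z' = { y ∈ Y' : (∃ z ∈ Z with d(y,z) ≤ γ·r) and (for every z ∈ Z, d(y,C) ≥ d(z,C) − r) }. Then there exists y ∈ Z' with d(y,a*) ≤ r. -/
import Mathlib


/-- inductive step of Lemma 3 (AFN candidate sets stay close to the
furthest neighbor). -/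
theorem stmt_2 {X : Type*} [MetricSpace X] (P C : Finset X)
    (hP : P.Nonempty) (hC : C.Nonempty)
    (astar : X) (hastar : astar ∈ P)
    (hfar : ∀ p ∈ P, Metric.infDist p (C : Set X) ≤ Metric.infDist astar (C : Set X))
    (r γ : ℝ) (hr : 0 < r) (hγ : 4 ≤ γ)
    (Z : Finset X) (hZP : Z ⊆ P)
    (z' : X) (hz'Z : z' ∈ Z) (hz' : dist z' astar ≤ 2 * r)
    (Y' : Finset X) (hY' : ∀ p ∈ P, ∃ y ∈ Y', dist p y ≤ r) :
    ∃ y ∈ Y', ((∃ z ∈ Z, dist y z ≤ γ * r) ∧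
      (∀ z ∈ Z, Metric.infDist y (C : Set X) ≥ Metric.infDist z (C : Set X) - r)) ∧
      dist y astar ≤ r := by
  obtain ⟨y, hyY, hya⟩ := hY' astar hastar
  rw [dist_comm] at hya
  refine ⟨y, hyY, ⟨⟨z', hz'Z, ?_⟩, ?_⟩, hya⟩
  · calc dist y z' ≤ dist y astar + dist astar z' := dist_triangle _ _ _
      _ ≤ r + 2 * r := by rw [dist_comm astar z']; linarith
      _ ≤ γ * r := by nlinarith
  · intro z hz
    have h1 : Metric.infDist z (C : Set X) ≤ Metric.infDist astar (C : Set X) :=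
      hfar z (hZP hz)
    have h2 : Metric.infDist astar (C : Set X) ≤
        Metric.infDist y (C : Set X) + dist astar y :=
      Metric.infDist_le_infDist_add_dist
    rw [dist_comm] at h2
    linarith
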